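/- (Włodarski) Let α, β be real numbers such that α is not an integer multiple of π/4 and cos β = cos²α. Then α/π is irrational or β/π is irrational. -/

import Mathlib

open scoped Real

private lemma multiset_prod_le_one {s : Multiset ℝ} (h : ∀ a ∈ s, 0 ≤ a ∧ a ≤ 1) :
    0 ≤ s.prod ∧ s.prod ≤ 1 := by
  induction s using Multiset.induction_on with
  | empty => simp
  | cons a s ih =>
    obtain ⟨ha0, ha1⟩ := h a (Multiset.mem_cons_self a s)
    obtain ⟨hs0, hs1⟩ := ih (fun b hb => h b (Multiset.mem_cons_of_mem hb))
    rw [Multiset.prod_cons]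
    exact ⟨by positivity, by nlinarith⟩

open Polynomial IntermediateField in
private lemma key {x : ℝ} (hx : IsIntegral ℤ x) {z : ℂ} {n : ℕ} (hn : n ≠ 0) (hz : z ^ n = 1)
    (hxz : (x : ℂ) = (z ^ 2 + z⁻¹ ^ 2) / 2) : x = 0 ∨ x = 1 ∨ x = -1 := by
  classical
  have hzint : IsIntegral ℚ z := by
    refine ⟨X ^ n - C 1, monic_X_pow_sub_C 1 hn, ?_⟩
    simp [hz]
  set K : IntermediateField ℚ ℂ := ℚ⟮z⟯ with hK
  haveI : FiniteDimensional ℚ K := IntermediateField.adjoin.finiteDimensional hzint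
  haveI : NumberField K := ⟨⟩
  have hzmem : z ∈ K := IntermediateField.mem_adjoin_simple_self ℚ z
  have h2mem : (2 : ℂ) ∈ K := ofNat_mem K 2
  have hxmem : (x : ℂ) ∈ K := by
    rw [hxz]
    exact div_mem (add_mem (pow_mem hzmem 2) (pow_mem (inv_mem hzmem) 2)) h2mem
  set zK : K := ⟨z, hzmem⟩ with hzK
  set xK : K := ⟨(x : ℂ), hxmem⟩ with hxK
  have hminC : minpoly ℚ ((x : ℝ) : ℂ) = minpoly ℚ x :=
    minpoly.algebraMap_eq Complex.ofReal_injective x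
  have hminK : minpoly ℚ xK = minpoly ℚ x := by
    have h0 : ((x : ℝ) : ℂ) = algebraMap K ℂ xK := rfl
    rw [← hminC, h0, minpoly.algebraMap_eq (algebraMap K ℂ).injective]
  set P : ℚ[X] := minpoly ℚ x with hP
  have hxq : IsIntegral ℚ x := hx.tower_top
  have hPmonic : P.Monic := minpoly.monic hxq
  set Pm : ℂ[X] := P.map (algebraMap ℚ ℂ) with hPm
  have hPmmonic : Pm.Monic := hPmonic.map _
  -- every root of Pm has norm at most 1
  have hroots : ∀ r ∈ Pm.roots, ‖r‖ ≤ 1 := by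
    intro r hr
    have hrs : r ∈ P.rootSet ℂ := by
      rw [mem_rootSet]
      refine ⟨minpoly.ne_zero hxq, ?_⟩
      have := (mem_roots hPmmonic.ne_zero).mp hr
      rwa [IsRoot, eval_map, ← aeval_def] at this
    rw [← hminK] at hrs
    obtain ⟨φ, rfl⟩ := (NumberField.Embeddings.range_eval_eq_rootSet_minpoly K ℂ xK).symm.subset hrs
    have hxKeq : xK = (zK ^ 2 + zK⁻¹ ^ 2) / 2 := by
      apply Subtype.ext
      push_cast [hxK, hzK]
      exact hxz
    have hzKn : zK ^ n = 1 := by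
      apply Subtype.ext
      push_cast [hzK]
      exact hz
    have hvn : (φ zK) ^ n = 1 := by rw [← map_pow, hzKn, map_one]
    have hv : ‖φ zK‖ = 1 := by
      exact Complex.norm_eq_one_of_pow_eq_one hvn hn
    have hφx : φ xK = ((φ zK) ^ 2 + (φ zK)⁻¹ ^ 2) / 2 := by
      simp only [hxKeq, map_div₀, map_add, map_pow, map_inv₀, map_ofNat]
    show ‖φ xK‖ ≤ 1
    rw [hφx]
    have hvinv : ‖(φ zK)⁻¹‖ = 1 := by rw [norm_inv, hv]; norm_num
    calc ‖((φ zK) ^ 2 + (φ zK)⁻¹ ^ 2) / 2‖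
        = ‖(φ zK) ^ 2 + (φ zK)⁻¹ ^ 2‖ / 2 := by
          rw [norm_div, Complex.norm_two]
      _ ≤ (‖(φ zK) ^ 2‖ + ‖(φ zK)⁻¹ ^ 2‖) / 2 := by
          have := norm_add_le ((φ zK) ^ 2) ((φ zK)⁻¹ ^ 2)
          linarith
      _ ≤ 1 := by rw [norm_pow, norm_pow, hv, hvinv]; norm_num
  -- the constant coefficient is an integer
  have hPint : P = (minpoly ℤ x).map (algebraMap ℤ ℚ) :=
    minpoly.isIntegrallyClosed_eq_field_fractions' ℚ hx
  set c : ℤ := (minpoly ℤ x).coeff 0 with hc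
  have hcoeff : P.coeff 0 = (c : ℚ) := by rw [hPint, coeff_map]; rfl
  by_cases hc0 : c = 0
  · left
    have : P.coeff 0 = 0 := by rw [hcoeff, hc0]; norm_num
    exact (minpoly.coeff_zero_eq_zero hxq).mp this
  · have hsplit : Pm.Splits :=
      IsAlgClosed.splits Pm
    have hprod : Pm.coeff 0 = (-1) ^ Pm.natDegree * Pm.roots.prod :=
      hsplit.coeff_zero_eq_prod_roots_of_monic hPmmonic
    have hcoeffm : Pm.coeff 0 = ((c : ℚ) : ℂ) := by
      rw [hPm, coeff_map, hcoeff]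
      exact eq_ratCast _ _
    have habs : ((|c| : ℤ) : ℝ) = (Pm.roots.map (fun r => ‖r‖)).prod := by
      have h1 : ‖Pm.coeff 0‖ = ‖Pm.roots.prod‖ := by
        rw [hprod, norm_mul, norm_pow]
        simp
      have h2 : ‖Pm.roots.prod‖ = (Pm.roots.map (fun r => ‖r‖)).prod :=
        map_multiset_prod (normHom : ℂ →*₀ ℝ) _
      rw [← h2, ← h1, hcoeffm]
      push_cast
      simp
    have hxroot : ((x : ℝ) : ℂ) ∈ Pm.roots := by
      rw [mem_roots hPmmonic.ne_zero, IsRoot, eval_map, ← aeval_def, ← hminC]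
      exact minpoly.aeval ℚ _
    set s : Multiset ℂ := Pm.roots.erase ((x:ℝ):ℂ) with hs
    have hcons : Pm.roots = ((x:ℝ):ℂ) ::ₘ s := (Multiset.cons_erase hxroot).symm
    have hsprod : 0 ≤ (s.map (fun r => ‖r‖)).prod ∧
        (s.map (fun r => ‖r‖)).prod ≤ 1 := by
      apply multiset_prod_le_one
      intro a ha
      obtain ⟨r, hr, rfl⟩ := Multiset.mem_map.mp ha
      exact ⟨norm_nonneg _, hroots r (Multiset.mem_of_mem_erase hr)⟩
    have h1le : (1 : ℝ) ≤ ((|c| : ℤ) : ℝ) := by exact_mod_cast Int.one_le_abs hc0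
    have hxabs : ‖((x:ℝ):ℂ)‖ ≤ 1 := hroots _ hxroot
    have hxabs0 : (0:ℝ) ≤ ‖((x:ℝ):ℂ)‖ := norm_nonneg _
    have heq : ((|c| : ℤ) : ℝ)
        = ‖((x:ℝ):ℂ)‖ * (s.map (fun r => ‖r‖)).prod := by
      rw [habs, hcons]
      simp [Multiset.prod_cons]
    have habs1 : ‖((x:ℝ):ℂ)‖ = 1 := by nlinarith [hsprod.1, hsprod.2]
    have hxa : |x| = 1 := by rwa [Complex.norm_real, Real.norm_eq_abs] at habs1
    rcases (abs_eq (by norm_num : (0:ℝ) ≤ 1)).mp hxa with h | h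
    · exact Or.inr (Or.inl h)
    · exact Or.inr (Or.inr h)

/-- Włodarski's lemma: if `α` is not an integer multiple of `π/4` and
`cos β = cos² α`, then `α` or `β` is an irrational multiple of `π`. -/
theorem wlodarski (α β : ℝ) (hα : ¬ ∃ k : ℤ, α = k * (π / 4))
    (hβ : Real.cos β = (Real.cos α) ^ 2) :
    Irrational (α / π) ∨ Irrational (β / π) := by
  by_contra hcon
  push_neg at hcon
  obtain ⟨ha, hb⟩ := hcon
  rw [Irrational, not_not] at ha hb
  obtain ⟨a, ha⟩ := ha
  obtain ⟨b, hb⟩ := hb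
  have hπ : (π : ℝ) ≠ 0 := Real.pi_ne_zero
  have hαa : α = (a : ℝ) * π := by field_simp at ha; linarith [ha]
  have hβb : β = (b : ℝ) * π := by field_simp at hb; linarith [hb]
  -- roots of unity
  have hden : ∀ q : ℚ, ∀ θ : ℝ, θ = (q : ℝ) * π →
      Complex.exp (θ * Complex.I) ^ (2 * q.den) = 1 := by
    intro q θ hθ
    rw [← Complex.exp_nat_mul]
    have hq : ((q.den : ℚ) * q) = (q.num : ℚ) := by
      have hd : ((q.den : ℚ)) ≠ 0 := by
        exact_mod_cast q.den_ne_zero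
      nth_rewrite 2 [← Rat.num_div_den q]
      rw [mul_div_cancel₀ _ hd]
    have hqc : ((q.den : ℂ) * (q : ℂ)) = (q.num : ℂ) := by exact_mod_cast hq
    have hθc : (θ : ℂ) = (q : ℂ) * (π : ℂ) := by
      rw [hθ]; push_cast; ring
    have h2 : ((2 * q.den : ℕ) : ℂ) * (θ * Complex.I) = (q.num : ℂ) * (2 * π * Complex.I) := by
      rw [hθc]; push_cast
      linear_combination (2 * (π : ℂ) * Complex.I) * hqc
    rw [h2]
    exact Complex.exp_int_mul_two_pi_mul_I q.num
  set z := Complex.exp ((α : ℂ) * Complex.I) with hzdef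
  set w := Complex.exp ((β : ℂ) * Complex.I) with hwdef
  have hzn : z ^ (2 * a.den) = 1 := hden a α hαa
  have hwm : w ^ (2 * b.den) = 1 := hden b β hβb
  have hm1 : 1 ≤ 2 * b.den := by have := b.den_pos; omega
  have hn0 : 2 * a.den ≠ 0 := by have := a.den_pos; omega
  have hwint : IsIntegral ℤ w := by
    refine ⟨Polynomial.X ^ (2 * b.den) - Polynomial.C 1,
      Polynomial.monic_X_pow_sub_C 1 (by omega), ?_⟩
    simp [hwm]
  have hwinv : w⁻¹ = w ^ (2 * b.den - 1) := by
    refine inv_eq_of_mul_eq_one_right ?_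
    rw [← pow_succ', Nat.sub_add_cancel hm1, hwm]
  have hcosβ : Complex.cos (β : ℂ) = (w + w⁻¹) / 2 := by
    rw [Complex.cos, hwdef, ← Complex.exp_neg]
    ring_nf
  set x : ℝ := Real.cos (2 * α) with hxdef
  have hxz : (x : ℂ) = (z ^ 2 + z⁻¹ ^ 2) / 2 := by
    rw [hxdef, Complex.ofReal_cos, Complex.cos, hzdef, ← Complex.exp_neg,
      ← Complex.exp_nat_mul, ← Complex.exp_nat_mul]
    push_cast
    ring_nf
  have hx2 : x = 2 * Real.cos β - 1 := by
    rw [hxdef, Real.cos_two_mul, hβ]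
  have hxw : (x : ℂ) = w + w ^ (2 * b.den - 1) - 1 := by
    rw [hx2]
    push_cast
    rw [hcosβ, ← hwinv]
    ring
  have hxint : IsIntegral ℤ x := by
    have h1 : IsIntegral ℤ ((x : ℝ) : ℂ) := by
      rw [hxw]
      exact (hwint.add (hwint.pow _)).sub isIntegral_one
    have h2 : algebraMap ℝ ℂ x = ((x : ℝ) : ℂ) := rfl
    rw [← h2] at h1
    exact (isIntegral_algebraMap_iff (algebraMap ℝ ℂ).injective).mp h1
  rcases key hxint hn0 hzn hxz with h0 | h1 | hm
  · -- cos (2α) = 0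
    rw [hxdef] at h0
    obtain ⟨k, hk⟩ := Real.cos_eq_zero_iff.mp h0
    exact hα ⟨2 * k + 1, by push_cast; linarith⟩
  · -- cos (2α) = 1, so sin α = 0
    have hsin : Real.sin α = 0 := by
      have hc2 : Real.cos (2 * α) = 1 := h1
      rw [Real.cos_two_mul] at hc2
      have hsq : Real.sin α ^ 2 = 0 := by
        nlinarith [Real.sin_sq_add_cos_sq α]
      exact (pow_eq_zero_iff two_ne_zero).mp hsq
    obtain ⟨k, hk⟩ := Real.sin_eq_zero_iff.mp hsin
    exact hα ⟨4 * k, by push_cast; linarith⟩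
  · -- cos (2α) = -1, so cos α = 0
    have hcos : Real.cos α = 0 := by
      have hc2 : Real.cos (2 * α) = -1 := hm
      rw [Real.cos_two_mul] at hc2
      have hsq : Real.cos α ^ 2 = 0 := by nlinarith
      exact (pow_eq_zero_iff two_ne_zero).mp hsq
    obtain ⟨k, hk⟩ := Real.cos_eq_zero_iff.mp hcos
    exact hα ⟨2 * (2 * k + 1), by push_cast; linarith⟩
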